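/- Let φ be a (1,1)-tensor field and ψ a (0,2)-tensor field on a smooth manifold. Define Φ₁(φ,ψ)(X,Y,Z) := (L_{φ(X)}ψ − L_X(ψ∘₁φ))(Y,Z) − (L_{φ(Z)}ψ − L_Z(ψ∘₁φ))(Y,X) + (ψ∘₂φ)(Y,[X,Z]) − (ψ∘₁φ)(Y,[X,Z]), where (ψ∘₁φ)(X,Y) = ψ(φX,Y), (ψ∘₂φ)(X,Y) = ψ(X,φY), and L_X is the Lie derivative of (0,2)-tensor fields. Then Φ₁(φ,ψ) is a (0,3)-tensor field, i.e., C^∞(M)-linear in each of X, Y, Z. -/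

import Mathlib

open scoped BigOperators

noncomputable section

/-- Points of the model space `ℝ^m`. -/
abbrev Pt (m : ℕ) := Fin m → ℝ
/-- Vector fields (or 1-forms) on `ℝ^m`, given by their components. -/
abbrev VF (m : ℕ) := Pt m → Fin m → ℝ
/-- (0,2)-tensor fields (or (1,1)-tensor fields) on `ℝ^m`, given by components. -/
abbrev T02 (m : ℕ) := Pt m → Fin m → Fin m → ℝ
/-- (0,3)- or (1,2)-tensor fields on `ℝ^m`, given by components. -/
abbrev T3 (m : ℕ) := Pt m → Fin m → Fin m → Fin m → ℝ

variable {m : ℕ}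

/-- `i`-th partial derivative of a scalar function. -/
def pd (i : Fin m) (f : Pt m → ℝ) (x : Pt m) : ℝ :=
  fderiv ℝ f x (Pi.single i 1)

/-- Derivative of a function `f` along a vector field `X`. -/
def Xdot (X : VF m) (f : Pt m → ℝ) (x : Pt m) : ℝ :=
  ∑ k, X x k * pd k f x

/-- Lie bracket of vector fields, in components. -/
def lieB (X Y : VF m) : VF m := fun x i =>
  ∑ k, (X x k * pd k (fun y => Y y i) x - Y x k * pd k (fun y => X y i) x)

/-- Evaluation `ψ(X)` of a 1-form on a vector field. -/
def ev1 (ψ X : VF m) (x : Pt m) : ℝ := ∑ i, ψ x i * X x i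

/-- Exterior derivative of a function, as a 1-form. -/
def dF (f : Pt m → ℝ) : VF m := fun x i => pd i f x

/-- Exterior derivative of a 1-form, as a 2-form: `(dψ)_{ij} = ∂_i ψ_j - ∂_j ψ_i`. -/
def d2 (ψ : VF m) : T02 m := fun x i j =>
  pd i (fun y => ψ y j) x - pd j (fun y => ψ y i) x

/-- Evaluation of a (0,2)-tensor field on two vector fields. -/
def ev2 (T : T02 m) (X Y : VF m) (x : Pt m) : ℝ :=
  ∑ i, ∑ j, T x i j * X x i * Y x j

/-- Lie derivative of a 1-form `ψ` along `X`, evaluated on `Y`: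
`(L_X ψ)(Y) = X·(ψ(Y)) - ψ([X,Y])`. -/
def lie1 (X ψ Y : VF m) (x : Pt m) : ℝ :=
  Xdot X (ev1 ψ Y) x - ev1 ψ (lieB X Y) x

/-- Lie derivative of a (0,2)-tensor field `T` along `X`, evaluated on `Y, Z`:
`(L_X T)(Y,Z) = X·T(Y,Z) - T([X,Y],Z) - T(Y,[X,Z])`. -/
def lie2 (X : VF m) (T : T02 m) (Y Z : VF m) (x : Pt m) : ℝ :=
  Xdot X (ev2 T Y Z) x - ev2 T (lieB X Y) Z x - ev2 T Y (lieB X Z) x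

/-- Application of a (1,1)-tensor field to a vector field: `(φX)^i = φ^i_j X^j`. -/
def appT (φ : T02 m) (X : VF m) : VF m := fun x i => ∑ j, φ x i j * X x j

/-- `(ψ∘₁φ)(X,Y) = ψ(φX,Y)`, in components `(ψ∘₁φ)_{ij} = ψ_{aj} φ^a_i`. -/
def comp1 (ψ φ : T02 m) : T02 m := fun x i j => ∑ a, ψ x a j * φ x a i

/-- `(ψ∘₂φ)(X,Y) = ψ(X,φY)`, in components `(ψ∘₂φ)_{ij} = ψ_{ia} φ^a_j`. -/
def comp2 (ψ φ : T02 m) : T02 m := fun x i j => ∑ a, ψ x i a * φ x a j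

/-- Composition `ψ∘φ` of a 1-form with a (1,1)-tensor field:  `(ψ∘φ)_i = ψ_a φ^a_i`. -/
def compF (ψ : VF m) (φ : T02 m) : VF m := fun x i => ∑ a, ψ x a * φ x a i

/-- Exterior derivative of a 2-form `T`, as a 3-form:
`(dT)_{ijk} = ∂_i T_{jk} - ∂_j T_{ik} + ∂_k T_{ij}`. -/
def d3 (T : T02 m) : T3 m := fun x i j k =>
  pd i (fun y => T y j k) x - pd j (fun y => T y i k) x + pd k (fun y => T y i j) x

/-- Evaluation of a (0,3)-tensor field on three vector fields. -/
def ev3 (U : T3 m) (X Y Z : VF m) (x : Pt m) : ℝ :=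
  ∑ i, ∑ j, ∑ k, U x i j k * X x i * Y x j * Z x k

/-- Pointwise sum of vector fields. -/
def addV (X Y : VF m) : VF m := fun x i => X x i + Y x i

/-- Pointwise multiplication of a vector field by a function. -/
def smulV (f : Pt m → ℝ) (X : VF m) : VF m := fun x i => f x * X x i


/-- The first operator of Theorem 3.4:
`Φ₁(φ,ψ)(X,Y,Z) = (L_{φ(X)}ψ − L_X(ψ∘₁φ))(Y,Z) − (L_{φ(Z)}ψ − L_Z(ψ∘₁φ))(Y,X)
  + (ψ∘₂φ)(Y,[X,Z]) − (ψ∘₁φ)(Y,[X,Z])`. -/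
def Phi1 (φ ψ : T02 m) (X Y Z : VF m) (x : Pt m) : ℝ :=
  (lie2 (appT φ X) ψ Y Z x - lie2 X (comp1 ψ φ) Y Z x)
  - (lie2 (appT φ Z) ψ Y X x - lie2 Z (comp1 ψ φ) Y X x)
  + ev2 (comp2 ψ φ) Y (lieB X Z) x - ev2 (comp1 ψ φ) Y (lieB X Z) x


/-! ### Auxiliary development -/

section Aux
variable {m : ℕ}

/-- Componentwise differentiability of a vector field. -/
def DV (X : VF m) : Prop := ∀ i, Differentiable ℝ (fun y => X y i)

/-- Componentwise differentiability of a (0,2)-tensor field. -/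
def DT (T : T02 m) : Prop := ∀ i j, Differentiable ℝ (fun y => T y i j)

lemma dv_of_contDiff {X : VF m} (h : ContDiff ℝ (⊤ : ℕ∞) X) : DV X := fun i =>
  differentiable_pi.mp (h.differentiable (by simp)) i

lemma dt_of_contDiff {T : T02 m} (h : ContDiff ℝ (⊤ : ℕ∞) T) : DT T := fun i j =>
  differentiable_pi.mp
    (differentiable_pi.mp (h.differentiable (by simp)) i) j

lemma DV.addV {X X' : VF m} (h : DV X) (h' : DV X') : DV (addV X X') := fun i => by
  simpa [_root_.addV] using (h i).fun_add (h' i)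

lemma DV.smulV {f : Pt m → ℝ} {X : VF m} (hf : Differentiable ℝ f) (h : DV X) :
    DV (smulV f X) := fun i => by
  simpa [_root_.smulV] using hf.fun_mul (h i)

lemma DV.appT {φ : T02 m} {X : VF m} (hφ : DT φ) (hX : DV X) : DV (appT φ X) := fun i => by
  have : Differentiable ℝ (fun y => ∑ a, φ y i a * X y a) :=
    Differentiable.fun_sum fun a _ => (hφ i a).fun_mul (hX a)
  simpa [_root_.appT] using this

lemma DT.comp1 {ψ φ : T02 m} (hψ : DT ψ) (hφ : DT φ) : DT (comp1 ψ φ) := fun i j => by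
  have : Differentiable ℝ (fun y => ∑ a, ψ y a j * φ y a i) :=
    Differentiable.fun_sum fun a _ => (hψ a j).fun_mul (hφ a i)
  simpa [_root_.comp1] using this

lemma pd_mul {f g : Pt m → ℝ} {x : Pt m} (hf : DifferentiableAt ℝ f x)
    (hg : DifferentiableAt ℝ g x) (i : Fin m) :
    pd i (fun y => f y * g y) x = pd i f x * g x + f x * pd i g x := by
  simp [pd, fderiv_fun_mul hf hg]; ring

lemma pd_sum {ι : Type*} (s : Finset ι) (f : ι → Pt m → ℝ) {x : Pt m}
    (h : ∀ i ∈ s, DifferentiableAt ℝ (f i) x) (k : Fin m) :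
    pd k (fun y => ∑ i ∈ s, f i y) x = ∑ i ∈ s, pd k (f i) x := by
  simp [pd, fderiv_fun_sum h]

end Aux

section Sums
variable {m : ℕ}

/-- Canonical triple sum. -/
def S3 (F : Fin m → Fin m → Fin m → ℝ) : ℝ := ∑ i, ∑ j, ∑ k, F i j k

/-- Canonical quadruple sum. -/
def S4 (F : Fin m → Fin m → Fin m → Fin m → ℝ) : ℝ := ∑ i, ∑ j, ∑ k, ∑ a, F i j k a

lemma S3_congr {F G : Fin m → Fin m → Fin m → ℝ} (h : ∀ i j k, F i j k = G i j k) :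
    S3 F = S3 G :=
  Finset.sum_congr rfl fun i _ => Finset.sum_congr rfl fun j _ =>
    Finset.sum_congr rfl fun k _ => h i j k

lemma S4_congr {F G : Fin m → Fin m → Fin m → Fin m → ℝ}
    (h : ∀ i j k a, F i j k a = G i j k a) : S4 F = S4 G :=
  Finset.sum_congr rfl fun i _ => Finset.sum_congr rfl fun j _ =>
    Finset.sum_congr rfl fun k _ => Finset.sum_congr rfl fun a _ => h i j k a

lemma S3_add {F G : Fin m → Fin m → Fin m → ℝ} :
    S3 (fun i j k => F i j k + G i j k) = S3 F + S3 G := by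
  simp [S3, Finset.sum_add_distrib]

lemma S3_sub {F G : Fin m → Fin m → Fin m → ℝ} :
    S3 (fun i j k => F i j k - G i j k) = S3 F - S3 G := by
  simp [S3, Finset.sum_sub_distrib]

lemma S4_add {F G : Fin m → Fin m → Fin m → Fin m → ℝ} :
    S4 (fun i j k a => F i j k a + G i j k a) = S4 F + S4 G := by
  simp [S4, Finset.sum_add_distrib]

lemma S4_sub {F G : Fin m → Fin m → Fin m → Fin m → ℝ} :
    S4 (fun i j k a => F i j k a - G i j k a) = S4 F - S4 G := by
  simp [S4, Finset.sum_sub_distrib]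

lemma S4_of_S3 {F : Fin m → Fin m → Fin m → Fin m → ℝ} :
    S3 (fun i j k => ∑ a, F i j k a) = S4 F := rfl

lemma sum_rot (F : Fin m → Fin m → Fin m → ℝ) :
    ∑ k, ∑ i, ∑ j, F k i j = S3 (fun i j k => F k i j) := by
  rw [Finset.sum_comm]
  exact Finset.sum_congr rfl fun i _ => Finset.sum_comm

lemma pull3 (F : Fin m → Fin m → Fin m → ℝ) :
    ∑ j, ∑ k, ∑ a, F j k a = ∑ a, ∑ j, ∑ k, F j k a :=
  (Finset.sum_congr rfl fun _ _ => Finset.sum_comm).trans Finset.sum_comm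

lemma swap13of3 (F : Fin m → Fin m → Fin m → ℝ) :
    ∑ j, ∑ k, ∑ a, F j k a = ∑ j, ∑ k, ∑ a, F a k j :=
  calc ∑ j, ∑ k, ∑ a, F j k a
      = ∑ j, ∑ a, ∑ k, F j k a := Finset.sum_congr rfl fun _ _ => Finset.sum_comm
    _ = ∑ a, ∑ j, ∑ k, F j k a := Finset.sum_comm
    _ = ∑ j, ∑ k, ∑ a, F a k j := Finset.sum_congr rfl fun _ _ => Finset.sum_comm

lemma S4_swap14 (F : Fin m → Fin m → Fin m → Fin m → ℝ) :
    S4 F = S4 (fun i j k a => F a j k i) :=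
  calc S4 F = ∑ i, ∑ a, ∑ j, ∑ k, F i j k a :=
        Finset.sum_congr rfl fun _ _ => pull3 _
    _ = ∑ a, ∑ i, ∑ j, ∑ k, F i j k a := Finset.sum_comm
    _ = ∑ i, ∑ j, ∑ k, ∑ a, F a j k i :=
        (Finset.sum_congr rfl fun _ _ => (pull3 _).symm : _)
    _ = S4 (fun i j k a => F a j k i) := rfl

lemma S4_swap24 (F : Fin m → Fin m → Fin m → Fin m → ℝ) :
    S4 F = S4 (fun i j k a => F i a k j) :=
  Finset.sum_congr rfl fun i _ => swap13of3 _

lemma S4_smul_congr (c : ℝ) (F G : Fin m → Fin m → Fin m → Fin m → ℝ)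
    (h : ∀ i j k a, F i j k a = c * G i j k a) : S4 F = c * S4 G := by
  rw [S4_congr h]; simp [S4, Finset.mul_sum]

lemma S4_add_congr (F G H : Fin m → Fin m → Fin m → Fin m → ℝ)
    (h : ∀ i j k a, F i j k a = G i j k a + H i j k a) : S4 F = S4 G + S4 H :=
  (S4_congr h).trans S4_add

end Sums

section Core
variable {m : ℕ}

lemma pd_ev2 {T : T02 m} {Y Z : VF m} (hT : DT T) (hY : DV Y) (hZ : DV Z)
    (k : Fin m) (x : Pt m) :
    pd k (ev2 T Y Z) x = ∑ i, ∑ j,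
      (pd k (fun y => T y i j) x * Y x i * Z x j
        + T x i j * pd k (fun y => Y y i) x * Z x j
        + T x i j * Y x i * pd k (fun y => Z y j) x) := by
  have h0 : ev2 T Y Z = fun y => ∑ i, ∑ j, T y i j * Y y i * Z y j := rfl
  rw [h0, pd_sum _ _ (fun i _ => DifferentiableAt.fun_sum fun j _ =>
    (((hT i j).fun_mul (hY i)).fun_mul (hZ j)).differentiableAt) k]
  refine Finset.sum_congr rfl fun i _ => ?_
  rw [pd_sum _ _ (fun j _ => (((hT i j).fun_mul (hY i)).fun_mul (hZ j)).differentiableAt) k]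
  refine Finset.sum_congr rfl fun j _ => ?_
  rw [pd_mul ((hT i j).fun_mul (hY i)).differentiableAt (hZ j).differentiableAt k,
    pd_mul (hT i j).differentiableAt (hY i).differentiableAt k]
  ring

lemma pd_appT {φ : T02 m} {W : VF m} (hφ : DT φ) (hW : DV W) (k i : Fin m) (x : Pt m) :
    pd k (fun y => appT φ W y i) x =
      ∑ a, (pd k (fun y => φ y i a) x * W x a + φ x i a * pd k (fun y => W y a) x) := by
  have h0 : (fun y => appT φ W y i) = fun y => ∑ a, φ y i a * W y a := rfl
  rw [h0, pd_sum _ _ (fun a _ => ((hφ i a).fun_mul (hW a)).differentiableAt) k]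
  exact Finset.sum_congr rfl fun a _ =>
    pd_mul (hφ i a).differentiableAt (hW a).differentiableAt k

lemma pd_comp1 {ψ φ : T02 m} (hψ : DT ψ) (hφ : DT φ) (k i j : Fin m) (x : Pt m) :
    pd k (fun y => comp1 ψ φ y i j) x =
      ∑ a, (pd k (fun y => ψ y a j) x * φ x a i + ψ x a j * pd k (fun y => φ y a i) x) := by
  have h0 : (fun y => comp1 ψ φ y i j) = fun y => ∑ a, ψ y a j * φ y a i := rfl
  rw [h0, pd_sum _ _ (fun a _ => ((hψ a j).fun_mul (hφ a i)).differentiableAt) k]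
  exact Finset.sum_congr rfl fun a _ =>
    pd_mul (hψ a j).differentiableAt (hφ a i).differentiableAt k

lemma lie2_formula (T : T02 m) (W Y Z : VF m) (hT : DT T) (hW : DV W) (hY : DV Y)
    (hZ : DV Z) (x : Pt m) :
    lie2 W T Y Z x =
      S3 (fun i j k => W x k * pd k (fun y => T y i j) x * Y x i * Z x j)
    + S3 (fun i j k => T x i j * Y x k * pd k (fun y => W y i) x * Z x j)
    + S3 (fun i j k => T x i j * Y x i * Z x k * pd k (fun y => W y j) x) := by
  have h1 : Xdot W (ev2 T Y Z) x = S3 (fun i j k =>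
      W x k * (pd k (fun y => T y i j) x * Y x i * Z x j
        + T x i j * pd k (fun y => Y y i) x * Z x j
        + T x i j * Y x i * pd k (fun y => Z y j) x)) := by
    show (∑ k, W x k * pd k (ev2 T Y Z) x) = _
    rw [← sum_rot]
    refine Finset.sum_congr rfl fun k _ => ?_
    rw [pd_ev2 hT hY hZ k x, Finset.mul_sum]
    exact Finset.sum_congr rfl fun i _ => Finset.mul_sum _ _ _
  have h2 : ev2 T (lieB W Y) Z x = S3 (fun i j k =>
      T x i j * (W x k * pd k (fun y => Y y i) x - Y x k * pd k (fun y => W y i) x)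
        * Z x j) := by
    refine Finset.sum_congr rfl fun i _ => Finset.sum_congr rfl fun j _ => ?_
    show T x i j * (∑ k, _) * Z x j = _
    rw [Finset.mul_sum, Finset.sum_mul]
  have h3 : ev2 T Y (lieB W Z) x = S3 (fun i j k =>
      T x i j * Y x i * (W x k * pd k (fun y => Z y j) x
        - Z x k * pd k (fun y => W y j) x)) := by
    refine Finset.sum_congr rfl fun i _ => Finset.sum_congr rfl fun j _ => ?_
    show T x i j * Y x i * (∑ k, _) = _
    rw [Finset.mul_sum]
  show Xdot W (ev2 T Y Z) x - ev2 T (lieB W Y) Z x - ev2 T Y (lieB W Z) x = _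
  rw [h1, h2, h3, ← S3_sub, ← S3_sub, ← S3_add, ← S3_add]
  exact S3_congr fun i j k => by ring

end Core

section Blocks
variable {m : ℕ}

lemma blockA (φ ψ : T02 m) (W Y Z : VF m) (hφ : DT φ) (hψ : DT ψ) (hW : DV W)
    (hY : DV Y) (hZ : DV Z) (x : Pt m) :
    lie2 (appT φ W) ψ Y Z x =
      S4 (fun i j k a => φ x k a * W x a * pd k (fun y => ψ y i j) x * Y x i * Z x j)
    + S4 (fun i j k a => ψ x i j * Y x k * pd k (fun y => φ y i a) x * W x a * Z x j)
    + S4 (fun i j k a => ψ x i j * Y x k * φ x i a * pd k (fun y => W y a) x * Z x j)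
    + S4 (fun i j k a => ψ x i j * Y x i * Z x k * pd k (fun y => φ y j a) x * W x a)
    + S4 (fun i j k a => ψ x i j * Y x i * Z x k * φ x j a * pd k (fun y => W y a) x) := by
  rw [lie2_formula ψ (appT φ W) Y Z hψ (DV.appT hφ hW) hY hZ x]
  have e1 : S3 (fun i j k => appT φ W x k * pd k (fun y => ψ y i j) x * Y x i * Z x j)
      = S4 (fun i j k a => φ x k a * W x a * pd k (fun y => ψ y i j) x * Y x i * Z x j) := by
    rw [← S4_of_S3]
    refine S3_congr fun i j k => ?_
    show (∑ a, φ x k a * W x a) * _ * _ * _ = _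
    rw [Finset.sum_mul, Finset.sum_mul, Finset.sum_mul]
  have e2 : S3 (fun i j k => ψ x i j * Y x k * pd k (fun y => appT φ W y i) x * Z x j)
      = S4 (fun i j k a => ψ x i j * Y x k * pd k (fun y => φ y i a) x * W x a * Z x j)
      + S4 (fun i j k a => ψ x i j * Y x k * φ x i a * pd k (fun y => W y a) x * Z x j) := by
    rw [← S4_add, ← S4_of_S3]
    refine S3_congr fun i j k => ?_
    rw [pd_appT hφ hW k i x, Finset.mul_sum, Finset.sum_mul]
    exact Finset.sum_congr rfl fun a _ => by ring
  have e3 : S3 (fun i j k => ψ x i j * Y x i * Z x k * pd k (fun y => appT φ W y j) x)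
      = S4 (fun i j k a => ψ x i j * Y x i * Z x k * pd k (fun y => φ y j a) x * W x a)
      + S4 (fun i j k a => ψ x i j * Y x i * Z x k * φ x j a * pd k (fun y => W y a) x) := by
    rw [← S4_add, ← S4_of_S3]
    refine S3_congr fun i j k => ?_
    rw [pd_appT hφ hW k j x, Finset.mul_sum]
    exact Finset.sum_congr rfl fun a _ => by ring
  rw [e1, e2, e3]; ring

lemma blockB (φ ψ : T02 m) (W Y Z : VF m) (hφ : DT φ) (hψ : DT ψ) (hW : DV W)
    (hY : DV Y) (hZ : DV Z) (x : Pt m) :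
    lie2 W (comp1 ψ φ) Y Z x =
      S4 (fun i j k a => W x k * pd k (fun y => ψ y a j) x * φ x a i * Y x i * Z x j)
    + S4 (fun i j k a => W x k * ψ x a j * pd k (fun y => φ y a i) x * Y x i * Z x j)
    + S4 (fun i j k a => ψ x a j * φ x a i * Y x k * pd k (fun y => W y i) x * Z x j)
    + S4 (fun i j k a => ψ x a j * φ x a i * Y x i * Z x k * pd k (fun y => W y j) x) := by
  rw [lie2_formula (comp1 ψ φ) W Y Z (DT.comp1 hψ hφ) hW hY hZ x]
  have e1 : S3 (fun i j k => W x k * pd k (fun y => comp1 ψ φ y i j) x * Y x i * Z x j)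
      = S4 (fun i j k a => W x k * pd k (fun y => ψ y a j) x * φ x a i * Y x i * Z x j)
      + S4 (fun i j k a => W x k * ψ x a j * pd k (fun y => φ y a i) x * Y x i * Z x j) := by
    rw [← S4_add, ← S4_of_S3]
    refine S3_congr fun i j k => ?_
    rw [pd_comp1 hψ hφ k i j x, Finset.mul_sum, Finset.sum_mul, Finset.sum_mul]
    exact Finset.sum_congr rfl fun a _ => by ring
  have e2 : S3 (fun i j k => comp1 ψ φ x i j * Y x k * pd k (fun y => W y i) x * Z x j)
      = S4 (fun i j k a => ψ x a j * φ x a i * Y x k * pd k (fun y => W y i) x * Z x j) := by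
    rw [← S4_of_S3]
    refine S3_congr fun i j k => ?_
    show (∑ a, ψ x a j * φ x a i) * _ * _ * _ = _
    rw [Finset.sum_mul, Finset.sum_mul, Finset.sum_mul]
  have e3 : S3 (fun i j k => comp1 ψ φ x i j * Y x i * Z x k * pd k (fun y => W y j) x)
      = S4 (fun i j k a => ψ x a j * φ x a i * Y x i * Z x k * pd k (fun y => W y j) x) := by
    rw [← S4_of_S3]
    refine S3_congr fun i j k => ?_
    show (∑ a, ψ x a j * φ x a i) * _ * _ * _ = _
    rw [Finset.sum_mul, Finset.sum_mul, Finset.sum_mul]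
  rw [e1, e2, e3]

lemma blockE (φ ψ : T02 m) (X Y Z : VF m) (x : Pt m) :
    ev2 (comp2 ψ φ) Y (lieB X Z) x =
      S4 (fun i j k a => ψ x i a * φ x a j * Y x i * (X x k * pd k (fun y => Z y j) x))
    - S4 (fun i j k a => ψ x i a * φ x a j * Y x i * (Z x k * pd k (fun y => X y j) x)) := by
  rw [← S4_sub]
  refine Finset.sum_congr rfl fun i _ => Finset.sum_congr rfl fun j _ => ?_
  show (∑ a, ψ x i a * φ x a j) * Y x i
      * (∑ k, (X x k * pd k (fun y => Z y j) x - Z x k * pd k (fun y => X y j) x)) = _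
  rw [Finset.mul_sum]
  refine Finset.sum_congr rfl fun k _ => ?_
  rw [Finset.sum_mul, Finset.sum_mul]
  exact Finset.sum_congr rfl fun a _ => by ring

lemma blockF (φ ψ : T02 m) (X Y Z : VF m) (x : Pt m) :
    ev2 (comp1 ψ φ) Y (lieB X Z) x =
      S4 (fun i j k a => ψ x a j * φ x a i * Y x i * (X x k * pd k (fun y => Z y j) x))
    - S4 (fun i j k a => ψ x a j * φ x a i * Y x i * (Z x k * pd k (fun y => X y j) x)) := by
  rw [← S4_sub]
  refine Finset.sum_congr rfl fun i _ => Finset.sum_congr rfl fun j _ => ?_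
  show (∑ a, ψ x a j * φ x a i) * Y x i
      * (∑ k, (X x k * pd k (fun y => Z y j) x - Z x k * pd k (fun y => X y j) x)) = _
  rw [Finset.mul_sum]
  refine Finset.sum_congr rfl fun k _ => ?_
  rw [Finset.sum_mul, Finset.sum_mul]
  exact Finset.sum_congr rfl fun a _ => by ring

end Blocks

section Main
variable {m : ℕ}

/-- The explicit tensorial expression equal to `Phi1`. -/
def Ttens (φ ψ : T02 m) (X Y Z : VF m) (x : Pt m) : ℝ :=
    S4 (fun i j k a => φ x k a * X x a * pd k (fun y => ψ y i j) x * Y x i * Z x j)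
  + S4 (fun i j k a => ψ x i j * Y x k * pd k (fun y => φ y i a) x * X x a * Z x j)
  + S4 (fun i j k a => ψ x i j * Y x i * Z x k * pd k (fun y => φ y j a) x * X x a)
  - S4 (fun i j k a => X x k * pd k (fun y => ψ y a j) x * φ x a i * Y x i * Z x j)
  - S4 (fun i j k a => X x k * ψ x a j * pd k (fun y => φ y a i) x * Y x i * Z x j)
  - S4 (fun i j k a => φ x k a * Z x a * pd k (fun y => ψ y i j) x * Y x i * X x j)
  - S4 (fun i j k a => ψ x i j * Y x k * pd k (fun y => φ y i a) x * Z x a * X x j)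
  - S4 (fun i j k a => ψ x i j * Y x i * X x k * pd k (fun y => φ y j a) x * Z x a)
  + S4 (fun i j k a => Z x k * pd k (fun y => ψ y a j) x * φ x a i * Y x i * X x j)
  + S4 (fun i j k a => Z x k * ψ x a j * pd k (fun y => φ y a i) x * Y x i * X x j)

lemma phi1_eq (φ ψ : T02 m) (X Y Z : VF m) (hφ : DT φ) (hψ : DT ψ)
    (hX : DV X) (hY : DV Y) (hZ : DV Z) (x : Pt m) :
    Phi1 φ ψ X Y Z x = Ttens φ ψ X Y Z x := by
  have c1 : S4 (fun i j k a => ψ x i j * Y x k * φ x i a * pd k (fun y => X y a) x * Z x j)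
      = S4 (fun i j k a => ψ x a j * φ x a i * Y x k * pd k (fun y => X y i) x * Z x j) := by
    rw [S4_swap14]; exact S4_congr fun i j k a => by ring
  have c2 : S4 (fun i j k a => ψ x i j * Y x i * Z x k * φ x j a * pd k (fun y => X y a) x)
      = S4 (fun i j k a => ψ x i a * φ x a j * Y x i * (Z x k * pd k (fun y => X y j) x)) := by
    rw [S4_swap24]; exact S4_congr fun i j k a => by ring
  have c3 : S4 (fun i j k a => ψ x i j * Y x k * φ x i a * pd k (fun y => Z y a) x * X x j)
      = S4 (fun i j k a => ψ x a j * φ x a i * Y x k * pd k (fun y => Z y i) x * X x j) := by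
    rw [S4_swap14]; exact S4_congr fun i j k a => by ring
  have c4 : S4 (fun i j k a => ψ x i j * Y x i * X x k * φ x j a * pd k (fun y => Z y a) x)
      = S4 (fun i j k a => ψ x i a * φ x a j * Y x i * (X x k * pd k (fun y => Z y j) x)) := by
    rw [S4_swap24]; exact S4_congr fun i j k a => by ring
  have c5 : S4 (fun i j k a => ψ x a j * φ x a i * Y x i * Z x k * pd k (fun y => X y j) x)
      = S4 (fun i j k a => ψ x a j * φ x a i * Y x i * (Z x k * pd k (fun y => X y j) x)) :=
    S4_congr fun i j k a => by ring
  have c6 : S4 (fun i j k a => ψ x a j * φ x a i * Y x i * X x k * pd k (fun y => Z y j) x)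
      = S4 (fun i j k a => ψ x a j * φ x a i * Y x i * (X x k * pd k (fun y => Z y j) x)) :=
    S4_congr fun i j k a => by ring
  simp only [Phi1]
  rw [blockA φ ψ X Y Z hφ hψ hX hY hZ x, blockB φ ψ X Y Z hφ hψ hX hY hZ x,
    blockA φ ψ Z Y X hφ hψ hZ hY hX x, blockB φ ψ Z Y X hφ hψ hZ hY hX x,
    blockE φ ψ X Y Z x, blockF φ ψ X Y Z x, c1, c2, c3, c4, c5, c6]
  unfold Ttens
  ring

end Main

section Lin
variable {m : ℕ}

lemma Ttens_single (φ ψ : T02 m) (X Y Z : VF m) (x : Pt m) :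
    Ttens φ ψ X Y Z x = S4 (fun i j k a =>
      φ x k a * X x a * pd k (fun y => ψ y i j) x * Y x i * Z x j
    + ψ x i j * Y x k * pd k (fun y => φ y i a) x * X x a * Z x j
    + ψ x i j * Y x i * Z x k * pd k (fun y => φ y j a) x * X x a
    - X x k * pd k (fun y => ψ y a j) x * φ x a i * Y x i * Z x j
    - X x k * ψ x a j * pd k (fun y => φ y a i) x * Y x i * Z x j
    - φ x k a * Z x a * pd k (fun y => ψ y i j) x * Y x i * X x j
    - ψ x i j * Y x k * pd k (fun y => φ y i a) x * Z x a * X x j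
    - ψ x i j * Y x i * X x k * pd k (fun y => φ y j a) x * Z x a
    + Z x k * pd k (fun y => ψ y a j) x * φ x a i * Y x i * X x j
    + Z x k * ψ x a j * pd k (fun y => φ y a i) x * Y x i * X x j) := by
  unfold Ttens
  rw [← S4_add, ← S4_add, ← S4_sub, ← S4_sub, ← S4_sub, ← S4_sub, ← S4_sub,
    ← S4_add, ← S4_add]

end Lin

/-- Theorem 3.4, first operator: `Φ₁(φ,ψ)` is a (0,3)-tensor field, i.e. it is
`C^∞(M)`-linear in each of its arguments `X, Y, Z`. -/
theorem stmt12 (m : ℕ) (φ ψ : T02 m)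
    (hφ : ContDiff ℝ (⊤ : ℕ∞) φ) (hψ : ContDiff ℝ (⊤ : ℕ∞) ψ) :
    ∀ (f : Pt m → ℝ), ContDiff ℝ (⊤ : ℕ∞) f →
    ∀ (X X' Y Z : VF m), ContDiff ℝ (⊤ : ℕ∞) X → ContDiff ℝ (⊤ : ℕ∞) X' →
      ContDiff ℝ (⊤ : ℕ∞) Y → ContDiff ℝ (⊤ : ℕ∞) Z →
    ∀ x : Pt m,
      (Phi1 φ ψ (addV X X') Y Z x = Phi1 φ ψ X Y Z x + Phi1 φ ψ X' Y Z x) ∧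
      (Phi1 φ ψ (smulV f X) Y Z x = f x * Phi1 φ ψ X Y Z x) ∧
      (Phi1 φ ψ X (addV Y X') Z x = Phi1 φ ψ X Y Z x + Phi1 φ ψ X X' Z x) ∧
      (Phi1 φ ψ X (smulV f Y) Z x = f x * Phi1 φ ψ X Y Z x) ∧
      (Phi1 φ ψ X Y (addV Z X') x = Phi1 φ ψ X Y Z x + Phi1 φ ψ X Y X' x) ∧
      (Phi1 φ ψ X Y (smulV f Z) x = f x * Phi1 φ ψ X Y Z x) := by
  intro f hf X X' Y Z hX hX' hY hZ x
  have dφ := dt_of_contDiff hφ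
  have dψ := dt_of_contDiff hψ
  have dX := dv_of_contDiff hX
  have dX' := dv_of_contDiff hX'
  have dY := dv_of_contDiff hY
  have dZ := dv_of_contDiff hZ
  have df : Differentiable ℝ f := hf.differentiable (by simp)
  refine ⟨?_, ?_, ?_, ?_, ?_, ?_⟩
  · rw [phi1_eq φ ψ _ Y Z dφ dψ (dX.addV dX') dY dZ x,
      phi1_eq φ ψ X Y Z dφ dψ dX dY dZ x, phi1_eq φ ψ X' Y Z dφ dψ dX' dY dZ x,
      Ttens_single, Ttens_single, Ttens_single]
    exact S4_add_congr _ _ _ fun i j k a => by simp only [addV]; ring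
  · rw [phi1_eq φ ψ _ Y Z dφ dψ (DV.smulV df dX) dY dZ x,
      phi1_eq φ ψ X Y Z dφ dψ dX dY dZ x, Ttens_single, Ttens_single]
    exact S4_smul_congr _ _ _ fun i j k a => by simp only [smulV]; ring
  · rw [phi1_eq φ ψ X _ Z dφ dψ dX (dY.addV dX') dZ x,
      phi1_eq φ ψ X Y Z dφ dψ dX dY dZ x, phi1_eq φ ψ X X' Z dφ dψ dX dX' dZ x,
      Ttens_single, Ttens_single, Ttens_single]
    exact S4_add_congr _ _ _ fun i j k a => by simp only [addV]; ring
  · rw [phi1_eq φ ψ X _ Z dφ dψ dX (DV.smulV df dY) dZ x,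
      phi1_eq φ ψ X Y Z dφ dψ dX dY dZ x, Ttens_single, Ttens_single]
    exact S4_smul_congr _ _ _ fun i j k a => by simp only [smulV]; ring
  · rw [phi1_eq φ ψ X Y _ dφ dψ dX dY (dZ.addV dX') x,
      phi1_eq φ ψ X Y Z dφ dψ dX dY dZ x, phi1_eq φ ψ X Y X' dφ dψ dX dY dX' x,
      Ttens_single, Ttens_single, Ttens_single]
    exact S4_add_congr _ _ _ fun i j k a => by simp only [addV]; ring
  · rw [phi1_eq φ ψ X Y _ dφ dψ dX dY (DV.smulV df dZ) x,
      phi1_eq φ ψ X Y Z dφ dψ dX dY dZ x, Ttens_single, Ttens_single]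
    exact S4_smul_congr _ _ _ fun i j k a => by simp only [smulV]; ring
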